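/- Let f : ℝ → ℝ, let α, β > 0, and let ω, ζ, c ∈ ℝ with ω < c and ζ < c. Suppose the (β,ζ)-derivative of f at c exists and equals L, i.e. (f(x) − f(c))/((x − ζ)^β − (c − ζ)^β) tends to L as x tends to c along the punctured neighborhood filter 𝓝[≠] c. Then the (α,ω)-derivative of f at c exists and equals (β/α) · (c − ζ)^(β−1)/(c − ω)^(α−1) · L, i.e. (f(x) − f(c))/((x − ω)^α − (c − ω)^α) tends to (β/α) · (c − ζ)^(β−1)/(c − ω)^(α−1) · L along 𝓝[≠] c. -/

import Mathlib

open Filter Topology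

theorem alpha_omega_deriv_change (f : ℝ → ℝ) (α β ω ζ c L : ℝ)
    (hα : 0 < α) (hβ : 0 < β) (hωc : ω < c) (hζc : ζ < c)
    (h : Tendsto (fun x => (f x - f c) / ((x - ζ) ^ β - (c - ζ) ^ β))
      (𝓝[≠] c) (𝓝 L)) :
    Tendsto (fun x => (f x - f c) / ((x - ω) ^ α - (c - ω) ^ α))
      (𝓝[≠] c) (𝓝 (β / α * ((c - ζ) ^ (β - 1) / (c - ω) ^ (α - 1)) * L)) := by
  have hcω : (0:ℝ) < c - ω := by linarith
  have hcζ : (0:ℝ) < c - ζ := by linarith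
  have hd2 : α * (c - ω) ^ (α - 1) ≠ 0 := by positivity
  have hgω : HasDerivAt (fun x : ℝ => (x - ω) ^ α) (α * (c - ω) ^ (α - 1)) c := by
    have := (Real.hasDerivAt_rpow_const (x := c - ω) (p := α)
      (Or.inl hcω.ne')).comp c ((hasDerivAt_id c).sub_const ω)
    simpa [Function.comp_def] using this
  have hgζ : HasDerivAt (fun x : ℝ => (x - ζ) ^ β) (β * (c - ζ) ^ (β - 1)) c := by
    have := (Real.hasDerivAt_rpow_const (x := c - ζ) (p := β)
      (Or.inl hcζ.ne')).comp c ((hasDerivAt_id c).sub_const ζ)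
    simpa [Function.comp_def] using this
  have hB : Tendsto (fun x => ((x - ζ) ^ β - (c - ζ) ^ β) / (x - c)) (𝓝[≠] c)
      (𝓝 (β * (c - ζ) ^ (β - 1))) := by
    refine (hasDerivAt_iff_tendsto_slope.mp hgζ).congr fun x => ?_
    rw [slope_def_field]
  have hC : Tendsto (fun x => ((x - ω) ^ α - (c - ω) ^ α) / (x - c)) (𝓝[≠] c)
      (𝓝 (α * (c - ω) ^ (α - 1))) := by
    refine (hasDerivAt_iff_tendsto_slope.mp hgω).congr fun x => ?_
    rw [slope_def_field]
  have hmain : Tendsto (fun x => (f x - f c) / ((x - ζ) ^ β - (c - ζ) ^ β)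
      * (((x - ζ) ^ β - (c - ζ) ^ β) / (x - c))
      * (((x - ω) ^ α - (c - ω) ^ α) / (x - c))⁻¹) (𝓝[≠] c)
      (𝓝 (L * (β * (c - ζ) ^ (β - 1)) * (α * (c - ω) ^ (α - 1))⁻¹)) :=
    (h.mul hB).mul (hC.inv₀ hd2)
  have heq : (fun x => (f x - f c) / ((x - ζ) ^ β - (c - ζ) ^ β)
      * (((x - ζ) ^ β - (c - ζ) ^ β) / (x - c))
      * (((x - ω) ^ α - (c - ω) ^ α) / (x - c))⁻¹)
      =ᶠ[𝓝[≠] c] (fun x => (f x - f c) / ((x - ω) ^ α - (c - ω) ^ α)) := by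
    have hnear : ∀ᶠ x in 𝓝 c, ζ < x ∧ ω < x :=
      (eventually_gt_nhds hζc).and (eventually_gt_nhds hωc)
    filter_upwards [nhdsWithin_le_nhds hnear, self_mem_nhdsWithin] with x hx hxc
    have hxc' : x ≠ c := hxc
    have hxζ : (0:ℝ) < x - ζ := by linarith [hx.1]
    have hxω : (0:ℝ) < x - ω := by linarith [hx.2]
    have hinj : ∀ a b p : ℝ, 0 < a → 0 < b → 0 < p → a ≠ b → a ^ p ≠ b ^ p := by
      intro a b p ha hb hp hab
      rcases lt_or_gt_of_ne hab with hlt | hlt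
      · exact (Real.rpow_lt_rpow ha.le hlt hp).ne
      · exact (Real.rpow_lt_rpow hb.le hlt hp).ne'
    have h1 : (x - ζ) ^ β - (c - ζ) ^ β ≠ 0 := by
      have := hinj (x - ζ) (c - ζ) β hxζ hcζ hβ (by intro hh; apply hxc'; linarith)
      exact sub_ne_zero.mpr this
    have h2 : (x - ω) ^ α - (c - ω) ^ α ≠ 0 := by
      have := hinj (x - ω) (c - ω) α hxω hcω hα (by intro hh; apply hxc'; linarith)
      exact sub_ne_zero.mpr this
    have h3 : x - c ≠ 0 := sub_ne_zero.mpr hxc'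
    field_simp
  have hval : L * (β * (c - ζ) ^ (β - 1)) * (α * (c - ω) ^ (α - 1))⁻¹
      = β / α * ((c - ζ) ^ (β - 1) / (c - ω) ^ (α - 1)) * L := by
    have h4 : (c - ω) ^ (α - 1) ≠ 0 := by positivity
    field_simp
  exact hval ▸ hmain.congr' heq
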